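/- arXiv:1110.2151 — 3 statements merged into one kernel-verified Lean document; each statement's English description precedes it below -/
import Mathlib

section
/- Let 𝓗 be a Hilbert space, K ⊆ 𝓗 a closed subspace with orthogonal projection P onto K, and (θ_t)_{t∈ℝ} a one-parameter group of unitaries on 𝓗 (θ_s θ_t = θ_{s+t}, θ_0 = 1). Suppose β is a unitary on 𝓗 with β² = 1, β fixes K pointwise, and β θ_t β = θ_{−t} for all t. Then for every t ∈ ℝ and every ξ ∈ K: ‖θ_{2t}(ξ) − ξ‖ ≤ 2‖θ_t(ξ) − P(θ_t(ξ))‖. -/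
theorem stmt_9 {𝕜 𝓗 : Type*} [RCLike 𝕜] [NormedAddCommGroup 𝓗]
    [InnerProductSpace 𝕜 𝓗] [CompleteSpace 𝓗]
    (K : Submodule 𝕜 𝓗) [CompleteSpace K]
    (θ : ℝ → (𝓗 ≃ₗᵢ[𝕜] 𝓗))
    (hgrp : ∀ s t : ℝ, ∀ ξ : 𝓗, θ s (θ t ξ) = θ (s + t) ξ)
    (hzero : ∀ ξ : 𝓗, θ 0 ξ = ξ)
    (β : 𝓗 ≃ₗᵢ[𝕜] 𝓗)
    (hβ2 : ∀ ξ : 𝓗, β (β ξ) = ξ)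
    (hβK : ∀ ξ ∈ K, β ξ = ξ)
    (hβθ : ∀ (t : ℝ) (ξ : 𝓗), β (θ t (β ξ)) = θ (-t) ξ) :
    ∀ (t : ℝ), ∀ ξ ∈ K,
      ‖θ (2 * t) ξ - ξ‖ ≤ 2 * ‖θ t ξ - (K.orthogonalProjection (θ t ξ) : 𝓗)‖ := by
  intro t ξ hξ
  set η := θ t ξ with hη
  set p : 𝓗 := (K.orthogonalProjection η : 𝓗) with hp
  have hpK : p ∈ K := (K.orthogonalProjection η).2
  -- step 1: θ(2t)ξ - ξ has the same norm as η - βη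
  have key : θ (-t) (θ (2 * t) ξ - ξ) = η - β η := by
    have h1 : θ (-t) (θ (2 * t) ξ) = η := by
      have h : -t + 2 * t = t := by ring
      rw [hgrp, h]
    have h2 : θ (-t) ξ = β η := by
      have := hβθ t ξ
      rw [hβK ξ hξ] at this
      rw [← this]
    rw [map_sub, h1, h2]
  have hnorm : ‖θ (2 * t) ξ - ξ‖ = ‖η - β η‖ := by
    rw [← key, LinearIsometryEquiv.norm_map]
  -- step 2: η - βη = (η - p) - β(η - p)
  have hβp : β p = p := hβK p hpK
  have hsplit : η - β η = (η - p) - β (η - p) := by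
    rw [map_sub, hβp]; abel
  calc ‖θ (2 * t) ξ - ξ‖ = ‖(η - p) - β (η - p)‖ := by rw [hnorm, hsplit]
    _ ≤ ‖η - p‖ + ‖β (η - p)‖ := norm_sub_le _ _
    _ = 2 * ‖η - p‖ := by rw [LinearIsometryEquiv.norm_map]; ring
end

section
/- A finitely generated group Γ such that for every nontrivial g ∈ Γ there exists a finite-dimensional complex unitary representation π of Γ with π(g) ≠ 1 is residually finite. -/
/-- `ℤ` is a Jacobson ring. -/
theorem int_isJacobsonRing : IsJacobsonRing ℤ := by
  rw [isJacobsonRing_iff_prime_eq]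
  intro P hP
  by_cases hbot : P = ⊥
  · subst hbot
    refine le_antisymm (fun x hx => ?_) Ideal.le_jacobson
    rw [Ideal.mem_jacobson_bot] at hx
    have h1 := hx 1
    have h2 := hx (-1)
    rw [Int.isUnit_iff] at h1 h2
    rw [Ideal.mem_bot]
    omega
  · haveI := hP
    haveI : P.IsMaximal := IsPrime.to_maximal_ideal hbot
    exact Ideal.jacobson_eq_self_of_isMaximal

/-- A field which is a finite `ℤ`-module is finite. -/
theorem field_finite_of_module_finite_int (k : Type*) [Field k] [Module.Finite ℤ k] :
    Finite k := by
  have hint : Algebra.IsIntegral ℤ k := Algebra.IsIntegral.of_finite ℤ k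
  obtain ⟨q, hq⟩ := CharP.exists k
  rcases CharP.char_is_prime_or_zero k q with hprime | hzero
  · haveI : Fact q.Prime := ⟨hprime⟩
    letI : Algebra (ZMod q) k := ZMod.algebra k q
    have : Module.Finite (ZMod q) k := by
      obtain ⟨s, hs⟩ := Module.Finite.fg_top (R := ℤ) (M := k)
      refine ⟨⟨s, ?_⟩⟩
      have hle := Submodule.span_subset_span ℤ (ZMod q) (s : Set k)
      rw [hs] at hle
      rw [eq_top_iff]
      exact fun x _ => hle trivial
    exact Module.finite_of_finite (ZMod q)
  · subst hzero
    haveI : CharZero k := CharP.charP_to_charZero k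
    have hinj : Function.Injective (algebraMap ℤ k) := by
      rw [algebraMap_int_eq]
      exact fun a b h => Int.cast_injective h
    exact absurd (isField_of_isIntegral_of_isField hinj (Field.toIsField k)) Int.not_isField

/-- The quotient of a finitely generated `ℤ`-algebra by a maximal ideal is finite. -/
theorem quotient_maximal_finite {A : Type*} [CommRing A] [Algebra.FiniteType ℤ A]
    (m : Ideal A) [m.IsMaximal] : Finite (A ⧸ m) := by
  haveI : IsJacobsonRing ℤ := int_isJacobsonRing
  letI : Field (A ⧸ m) := Ideal.Quotient.field m
  haveI : Algebra.FiniteType ℤ (A ⧸ m) :=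
    Algebra.FiniteType.of_surjective (Ideal.Quotient.mkₐ ℤ m)
      (Ideal.Quotient.mkₐ_surjective ℤ m)
  haveI : Module.Finite ℤ (A ⧸ m) := finite_of_finite_type_of_isJacobsonRing ℤ (A ⧸ m)
  exact field_finite_of_module_finite_int (A ⧸ m)

/-- A group is residually finite if every nontrivial element survives in some
finite quotient, i.e. lies outside a normal subgroup of finite index. -/
def ResiduallyFinite (G : Type*) [Group G] : Prop :=
  ∀ g : G, g ≠ 1 → ∃ N : Subgroup G, N.Normal ∧ N.FiniteIndex ∧ g ∉ N

set_option maxHeartbeats 2000000 in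
set_option synthInstance.maxHeartbeats 1000000 in
theorem stmt_12 {Γ : Type*} [Group Γ] (hfg : Group.FG Γ)
    (hrep : ∀ g : Γ, g ≠ 1 →
      ∃ (n : ℕ) (π : Γ →* Matrix.unitaryGroup (Fin n) ℂ), π g ≠ 1) :
    ResiduallyFinite Γ := by
  intro g hg
  obtain ⟨n, π, hπ⟩ := hrep g hg
  obtain ⟨S, hS⟩ := hfg.out
  -- the representation as matrices
  set ρ : Γ →* Matrix (Fin n) (Fin n) ℂ :=
    ((Matrix.unitaryGroup (Fin n) ℂ).subtype).comp π with hρ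
  have hρinv : ∀ a : Γ, ρ a⁻¹ = star (ρ a) := by
    intro a
    have : π a⁻¹ = (π a)⁻¹ := map_inv π a
    simp only [hρ, MonoidHom.comp_apply, this]
    rfl
  -- the finite set of generating entries, closed under star
  set E : Set ℂ :=
    ⋃ s ∈ (S : Set Γ), ⋃ i : Fin n, ⋃ j : Fin n, {ρ s i j, star (ρ s i j)} with hE
  have hEfin : E.Finite :=
    S.finite_toSet.biUnion fun s _ =>
      Set.finite_iUnion fun i => Set.finite_iUnion fun j =>
        (Set.finite_singleton _).insert _
  have hEstar : ∀ x ∈ E, star x ∈ E := by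
    intro x hx
    simp only [hE, Set.mem_iUnion, Set.mem_insert_iff, Set.mem_singleton_iff] at hx ⊢
    obtain ⟨s, hs, i, j, h | h⟩ := hx
    · exact ⟨s, hs, i, j, Or.inr (by rw [h])⟩
    · exact ⟨s, hs, i, j, Or.inl (by rw [h, star_star])⟩
  -- the finitely generated ring of entries
  set R : Subalgebra ℤ ℂ := Algebra.adjoin ℤ E with hR
  have hstarR : ∀ x ∈ R, star x ∈ R := by
    intro x hx
    have hle : R ≤ R.comap ((starRingEnd ℂ).toIntAlgHom) :=
      Algebra.adjoin_le fun y hy => Algebra.subset_adjoin (hEstar y hy)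
    exact hle hx
  -- all entries of the representation lie in `R`
  have key : ∀ γ : Γ, ∀ i j, ρ γ i j ∈ R := by
    set H : Subgroup Γ :=
      { carrier := {γ | ∀ i j, ρ γ i j ∈ R}
        one_mem' := by
          intro i j
          rw [map_one, Matrix.one_apply]
          split_ifs
          · exact one_mem R
          · exact zero_mem R
        mul_mem' := by
          intro a b ha hb i j
          rw [map_mul, Matrix.mul_apply]
          exact Subalgebra.sum_mem R fun c _ => mul_mem (ha i c) (hb c j)
        inv_mem' := by
          intro a ha i j
          rw [hρinv, Matrix.star_apply]
          exact hstarR _ (ha j i) } with hH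
    have : Subgroup.closure (S : Set Γ) ≤ H := by
      rw [Subgroup.closure_le]
      intro s hs i j
      exact Algebra.subset_adjoin
        (Set.mem_biUnion hs (Set.mem_iUnion.2 ⟨i, Set.mem_iUnion.2
          ⟨j, Set.mem_insert _ _⟩⟩))
    rw [hS] at this
    exact fun γ => this (Subgroup.mem_top γ)
  -- a nonzero element of `R` witnessing `ρ g ≠ 1`
  have hmat : ρ g ≠ 1 := by
    intro h
    exact hπ (Subtype.ext h)
  have hij : ∃ i j, ρ g i j ≠ (1 : Matrix (Fin n) (Fin n) ℂ) i j := by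
    by_contra h
    push_neg at h
    exact hmat (Matrix.ext fun i j => h i j)
  obtain ⟨i, j, hije⟩ := hij
  have hc : (1 : Matrix (Fin n) (Fin n) ℂ) i j ∈ R := by
    rw [Matrix.one_apply]
    split_ifs
    · exact one_mem R
    · exact zero_mem R
  set x : R := ⟨ρ g i j, key g i j⟩ - ⟨(1 : Matrix (Fin n) (Fin n) ℂ) i j, hc⟩ with hx
  have hx0 : x ≠ 0 := by
    intro h
    apply hije
    have h' : (x : ℂ) = 0 := by rw [h]; rfl
    rw [hx] at h'
    push_cast at h'
    exact sub_eq_zero.mp h'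
  -- `R` is a finitely generated `ℤ`-algebra, hence Jacobson
  haveI : IsJacobsonRing ℤ := int_isJacobsonRing
  haveI hft : Algebra.FiniteType ℤ R := by
    rw [← Subalgebra.fg_iff_finiteType]
    have : R = Algebra.adjoin ℤ (hEfin.toFinset : Set ℂ) := by
      rw [hEfin.coe_toFinset]
    rw [this]
    exact Subalgebra.fg_adjoin_finset _
  haveI : IsJacobsonRing R := isJacobsonRing_of_finiteType (A := ℤ)
  -- find a maximal ideal avoiding `x`
  have hjac : (⊥ : Ideal R).jacobson = ⊥ := by
    rw [← Ideal.radical_eq_jacobson]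
    exact Ideal.radical_bot_of_noZeroDivisors
  obtain ⟨m, ⟨-, hmmax⟩, hxm⟩ :=
    (Ideal.eq_jacobson_iff_notMem.mp hjac) x (by simpa [Ideal.mem_bot] using hx0)
  haveI := hmmax
  haveI : Finite (R ⧸ m) := quotient_maximal_finite m
  -- the representation over `R`
  set M1 : Γ →* Matrix (Fin n) (Fin n) R :=
    { toFun := fun γ => Matrix.of fun i j => (⟨ρ γ i j, key γ i j⟩ : R)
      map_one' := by
        ext i j
        simp [Matrix.one_apply, apply_ite (Subtype.val : R → ℂ)]
      map_mul' := by
        intro a b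
        ext i j
        simp only [Matrix.of_apply, map_mul, Matrix.mul_apply]
        push_cast
        rfl } with hM1
  -- reduce mod `m`
  set φm : Γ →* Matrix (Fin n) (Fin n) (R ⧸ m) :=
    ((Ideal.Quotient.mk m).mapMatrix).toMonoidHom.comp M1 with hφm
  set φ : Γ →* (Matrix (Fin n) (Fin n) (R ⧸ m))ˣ := φm.toHomUnits with hφ
  refine ⟨φ.ker, MonoidHom.normal_ker φ, Subgroup.finiteIndex_ker φ, ?_⟩
  intro hgk
  rw [MonoidHom.mem_ker] at hgk
  have h1 : φm g = 1 := by
    have := congrArg Units.val hgk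
    rwa [MonoidHom.coe_toHomUnits, Units.val_one] at this
  have h2 := congrArg (fun M => M i j) h1
  simp only [hφm, MonoidHom.comp_apply, RingHom.toMonoidHom_eq_coe,
    MonoidHom.coe_coe, RingHom.mapMatrix_apply, Matrix.map_apply] at h2
  apply hxm
  rw [← Ideal.Quotient.eq_zero_iff_mem, hx, map_sub, sub_eq_zero]
  have hone : (⟨(1 : Matrix (Fin n) (Fin n) ℂ) i j, hc⟩ : R)
      = (1 : Matrix (Fin n) (Fin n) R) i j := by
    apply Subtype.ext
    simp [Matrix.one_apply, apply_ite (Subtype.val : R → ℂ)]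
  rw [hone]
  calc Ideal.Quotient.mk m (M1 g i j) = (1 : Matrix (Fin n) (Fin n) (R ⧸ m)) i j := h2
    _ = Ideal.Quotient.mk m ((1 : Matrix (Fin n) (Fin n) R) i j) := by
        simp [Matrix.one_apply, apply_ite (Ideal.Quotient.mk m)]
end

section
/- If H is a finitely generated abelian group and Γ is a residually finite group, then the wreath product H ≀ Γ = H^{(Γ)} ⋊ Γ is residually finite. -/
/-- The generalized Bernoulli shift of `Γ` on the product group `I → H`. -/
def bernoulliShift (H : Type*) [Group H] {Γ I : Type*} [Group Γ] [MulAction Γ I] :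
    Γ →* MulAut (I → H) where
  toFun g :=
    { toFun := fun η ι => η (g⁻¹ • ι)
      invFun := fun η ι => η (g • ι)
      left_inv := fun η => funext fun ι => by simp
      right_inv := fun η => funext fun ι => by simp
      map_mul' := fun a b => rfl }
  map_one' := by ext η ι; simp
  map_mul' g h := by ext η ι; simp [mul_smul]

lemma bernoulliShift_support_finite {H Γ I : Type*} [Group H] [Group Γ]
    [MulAction Γ I] {f : I → H} (hf : (Function.mulSupport f).Finite) (g : Γ) :
    (Function.mulSupport (bernoulliShift H g f)).Finite := by
  have : Function.mulSupport (bernoulliShift H g f) =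
      (fun ι : I => g⁻¹ • ι) ⁻¹' Function.mulSupport f :=
    Function.mulSupport_comp_eq_preimage f (fun ι : I => g⁻¹ • ι)
  rw [this]
  exact hf.preimage (MulAction.injective (g⁻¹ : Γ)).injOn

/-- The wreath product `H ≀ Γ = H^{(Γ)} ⋊ Γ`, realized as the subgroup of the
unrestricted wreath product `(Γ → H) ⋊ Γ` consisting of the elements whose
first component is finitely supported. Here `Γ` acts on itself by left
multiplication. -/
def wreathProduct (H Γ : Type*) [Group H] [Group Γ] :
    Subgroup ((Γ → H) ⋊[bernoulliShift H] Γ) where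
  carrier := {x | (Function.mulSupport x.left).Finite}
  one_mem' := by simp [Function.mulSupport_one]
  mul_mem' := fun {a b} ha hb => by
    rw [Set.mem_setOf_eq, SemidirectProduct.mul_left]
    exact (ha.union (bernoulliShift_support_finite hb a.right)).subset
      (Function.mulSupport_mul _ _)
  inv_mem' := fun {a} ha => by
    rw [Set.mem_setOf_eq, SemidirectProduct.inv_left]
    exact bernoulliShift_support_finite (by simpa using ha) _

open Function DirectSum

lemma exists_finiteIndex_not_mem {H : Type*} [CommGroup H] (hfg : Group.FG H)
    {h : H} (hh : h ≠ 1) : ∃ K : Subgroup H, K.FiniteIndex ∧ h ∉ K := by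
  haveI : AddGroup.FG (Additive H) := GroupFG.iff_add_fg.mp hfg
  obtain ⟨n, ι, fι, p, hp, e, ⟨eqv⟩⟩ :=
    AddCommGroup.equiv_free_prod_directSum_zmod (Additive H)
  set x := eqv (Additive.ofMul h) with hxdef
  have hx : x ≠ 0 := by
    intro h0
    apply hh
    have := eqv.injective (h0.trans (map_zero eqv).symm)
    simpa using this
  have key : ∃ (A : Type) (_ : AddCommGroup A) (_ : Finite A)
      (ψ : ((Fin n →₀ ℤ) × ⨁ i : ι, ZMod (p i ^ e i)) →+ A), ψ x ≠ 0 := by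
    by_cases h1 : x.1 = 0
    · have h2 : x.2 ≠ 0 := fun h2 => hx (Prod.ext h1 h2)
      haveI : ∀ i, NeZero (p i ^ e i) := fun i => ⟨pow_ne_zero _ (hp i).pos.ne'⟩
      haveI : Finite (⨁ i : ι, ZMod (p i ^ e i)) :=
        Finite.of_equiv _ (DFinsupp.equivFunOnFintype).symm
      exact ⟨_, inferInstance, inferInstance, AddMonoidHom.snd _ _, h2⟩
    · obtain ⟨i, hi⟩ := Finsupp.ne_iff.mp h1
      have hi' : x.1 i ≠ 0 := by simpa using hi
      refine ⟨ZMod ((x.1 i).natAbs + 1), inferInstance, inferInstance,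
        (Int.castAddHom _).comp ((Finsupp.applyAddHom i).comp (AddMonoidHom.fst _ _)), ?_⟩
      simp only [AddMonoidHom.coe_comp, comp_apply, AddMonoidHom.coe_fst,
        Finsupp.applyAddHom_apply, Int.coe_castAddHom]
      rw [Ne, ZMod.intCast_zmod_eq_zero_iff_dvd]
      intro hdvd
      have h2 := Int.natAbs_dvd_natAbs.mpr hdvd
      simp only [Int.natAbs_natCast] at h2
      have := Nat.le_of_dvd (Nat.pos_of_ne_zero (Int.natAbs_ne_zero.mpr hi')) h2
      omega
  obtain ⟨A, _, _, ψ, hψ⟩ := key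
  let χ : H →* Multiplicative A :=
    { toFun := fun g => Multiplicative.ofAdd (ψ (eqv (Additive.ofMul g)))
      map_one' := by simp
      map_mul' := fun a b => by
        simp only [ofMul_mul, map_add, ofAdd_add] }
  refine ⟨χ.ker, inferInstance, ?_⟩
  intro hker
  rw [MonoidHom.mem_ker] at hker
  exact hψ (by simpa [χ] using hker)

instance SemidirectProduct.instFinite {N G : Type*} [Group N] [Group G]
    {φ : G →* MulAut N} [Finite N] [Finite G] : Finite (N ⋊[φ] G) :=
  Finite.of_injective (fun x => (x.left, x.right)) fun a b hab => by
    cases a; cases b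
    simp only [Prod.mk.injEq] at hab
    simp [hab.1, hab.2]

lemma Subgroup.normal_iInf' {G : Type*} [Group G] {ι : Sort*} {N : ι → Subgroup G}
    (h : ∀ i, (N i).Normal) : (⨅ i, N i).Normal :=
  ⟨fun n hn g => Subgroup.mem_iInf.mpr fun i =>
    (h i).conj_mem n (Subgroup.mem_iInf.mp hn i) g⟩

section Push

variable {H Γ : Type*} [CommGroup H] [Group Γ]

/-- Pushforward of a (finitely supported) function `Γ → H` to `Γ⧸M → H⧸K`,
summing over cosets. -/
noncomputable def wreathPushFun (M : Subgroup Γ) [M.Normal] (K : Subgroup H)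
    (f : Γ → H) : (Γ ⧸ M) → H ⧸ K :=
  fun c => ∏ᶠ γ ∈ {γ : Γ | (γ : Γ ⧸ M) = c}, ((f γ : H) : H ⧸ K)

omit [Group Γ] in
lemma pushFun_support_subset (K : Subgroup H) (f : Γ → H) :
    mulSupport (fun γ => ((f γ : H) : H ⧸ K)) ⊆ mulSupport f := fun γ hγ => by
  intro hf
  exact hγ (by simp [hf])

lemma pushFun_one (M : Subgroup Γ) [M.Normal] (K : Subgroup H) :
    wreathPushFun M K (1 : Γ → H) = 1 := by
  funext c
  simp [wreathPushFun, finprod_mem_one]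

lemma pushFun_mul (M : Subgroup Γ) [M.Normal] (K : Subgroup H) (f g : Γ → H)
    (hf : (mulSupport f).Finite) (hg : (mulSupport g).Finite) :
    wreathPushFun M K (f * g) = wreathPushFun M K f * wreathPushFun M K g := by
  funext c
  have hf' : ({γ : Γ | (γ : Γ ⧸ M) = c} ∩
      mulSupport fun γ => ((f γ : H) : H ⧸ K)).Finite :=
    hf.subset ((Set.inter_subset_right).trans (pushFun_support_subset K f))
  have hg' : ({γ : Γ | (γ : Γ ⧸ M) = c} ∩
      mulSupport fun γ => ((g γ : H) : H ⧸ K)).Finite :=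
    hg.subset ((Set.inter_subset_right).trans (pushFun_support_subset K g))
  show ∏ᶠ γ ∈ {γ : Γ | (γ : Γ ⧸ M) = c}, (((f * g) γ : H) : H ⧸ K) = _
  simp only [Pi.mul_apply, QuotientGroup.mk_mul]
  rw [finprod_mem_mul_distrib' hf' hg']
  rfl

lemma pushFun_shift (M : Subgroup Γ) [M.Normal] (K : Subgroup H) (g : Γ) (f : Γ → H) :
    wreathPushFun M K (bernoulliShift H g f) =
      bernoulliShift (H ⧸ K) ((g : Γ ⧸ M)) (wreathPushFun M K f) := by
  funext c
  show ∏ᶠ γ ∈ {γ : Γ | (γ : Γ ⧸ M) = c}, ((f (g⁻¹ • γ) : H) : H ⧸ K) =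
    wreathPushFun M K f (((g : Γ ⧸ M))⁻¹ • c)
  have himg : {γ : Γ | (γ : Γ ⧸ M) = c} =
      (fun γ => g * γ) '' {γ : Γ | (γ : Γ ⧸ M) = ((g : Γ ⧸ M))⁻¹ • c} := by
    ext γ
    constructor
    · intro hγ
      refine ⟨g⁻¹ * γ, ?_, by group⟩
      simp only [Set.mem_setOf_eq, QuotientGroup.mk_mul, QuotientGroup.mk_inv, smul_eq_mul]
      rw [hγ]
    · rintro ⟨j, hj, rfl⟩
      simp only [Set.mem_setOf_eq, smul_eq_mul] at hj ⊢
      rw [QuotientGroup.mk_mul, hj, mul_inv_cancel_left]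
  rw [himg, finprod_mem_image (mul_right_injective g).injOn]
  show _ = ∏ᶠ γ ∈ {γ : Γ | (γ : Γ ⧸ M) = ((g : Γ ⧸ M))⁻¹ • c}, ((f γ : H) : H ⧸ K)
  apply finprod_mem_congr rfl
  intro j _
  simp [smul_eq_mul, inv_mul_cancel_left]

lemma pushFun_single (M : Subgroup Γ) [M.Normal] (K : Subgroup H) (f : Γ → H) (γ₀ : Γ)
    (hsub : {γ : Γ | (γ : Γ ⧸ M) = (γ₀ : Γ ⧸ M)} ∩ mulSupport f ⊆ {γ₀}) :
    wreathPushFun M K f ((γ₀ : Γ ⧸ M)) = ((f γ₀ : H) : H ⧸ K) := by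
  have heq : {γ : Γ | (γ : Γ ⧸ M) = (γ₀ : Γ ⧸ M)} ∩
        mulSupport (fun γ => ((f γ : H) : H ⧸ K)) =
      ({γ₀} : Set Γ) ∩ mulSupport (fun γ => ((f γ : H) : H ⧸ K)) := by
    apply Set.Subset.antisymm
    · intro γ ⟨h1, h2⟩
      exact ⟨hsub ⟨h1, pushFun_support_subset K f h2⟩, h2⟩
    · intro γ ⟨h1, h2⟩
      refine ⟨?_, h2⟩
      rcases h1 with rfl
      rfl
  show ∏ᶠ γ ∈ {γ : Γ | (γ : Γ ⧸ M) = (γ₀ : Γ ⧸ M)}, ((f γ : H) : H ⧸ K) = _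
  rw [finprod_mem_inter_mulSupport_eq _ _ _ heq, finprod_mem_singleton]

/-- The homomorphism from the wreath product to the wreath product
`(H⧸K) ≀ (Γ⧸M)` (unrestricted, which is fine since the quotients are finite). -/
noncomputable def pushHom (M : Subgroup Γ) [M.Normal] (K : Subgroup H) :
    wreathProduct H Γ →* (((Γ ⧸ M) → H ⧸ K) ⋊[bernoulliShift (H ⧸ K)] (Γ ⧸ M)) where
  toFun x := ⟨wreathPushFun M K (x : (Γ → H) ⋊[bernoulliShift H] Γ).left,
    (((x : (Γ → H) ⋊[bernoulliShift H] Γ).right : Γ) : Γ ⧸ M)⟩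
  map_one' := by
    apply SemidirectProduct.ext
    · show wreathPushFun M K (1 : Γ → H) = 1
      exact pushFun_one M K
    · rfl
  map_mul' x y := by
    have hx : (mulSupport (x : (Γ → H) ⋊[bernoulliShift H] Γ).left).Finite := x.2
    have hy : (mulSupport (y : (Γ → H) ⋊[bernoulliShift H] Γ).left).Finite := y.2
    apply SemidirectProduct.ext
    · show wreathPushFun M K
          ((x : (Γ → H) ⋊[bernoulliShift H] Γ).left *
            bernoulliShift H (x : (Γ → H) ⋊[bernoulliShift H] Γ).right
              (y : (Γ → H) ⋊[bernoulliShift H] Γ).left) =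
        wreathPushFun M K (x : (Γ → H) ⋊[bernoulliShift H] Γ).left *
          bernoulliShift (H ⧸ K) (((x : (Γ → H) ⋊[bernoulliShift H] Γ).right : Γ) : Γ ⧸ M)
            (wreathPushFun M K (y : (Γ → H) ⋊[bernoulliShift H] Γ).left)
      rw [pushFun_mul M K _ _ hx (bernoulliShift_support_finite hy _), pushFun_shift]
    · show ((((x : (Γ → H) ⋊[bernoulliShift H] Γ).right *
          (y : (Γ → H) ⋊[bernoulliShift H] Γ).right : Γ)) : Γ ⧸ M) = _
      rw [QuotientGroup.mk_mul, SemidirectProduct.mul_right]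

end Push

theorem stmt_14 {H Γ : Type*} [CommGroup H] [Group Γ]
    (hfg : Group.FG H) (hΓ : ResiduallyFinite Γ) :
    ResiduallyFinite (wreathProduct H Γ) := by
  classical
  intro x hx
  by_cases hg : (x : (Γ → H) ⋊[bernoulliShift H] Γ).right = 1
  · -- the interesting case: `x = (f, 1)` with `f ≠ 1`
    have hf : (x : (Γ → H) ⋊[bernoulliShift H] Γ).left ≠ 1 := by
      intro hl
      exact hx (Subtype.ext (SemidirectProduct.ext hl hg))
    obtain ⟨γ₀, hγ₀⟩ : ∃ γ₀, (x : (Γ → H) ⋊[bernoulliShift H] Γ).left γ₀ ≠ 1 := by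
      by_contra hc
      push_neg at hc
      exact hf (funext hc)
    obtain ⟨K, hKfi, hKmem⟩ := exists_finiteIndex_not_mem hfg hγ₀
    haveI := hKfi
    have hsupp : (mulSupport (x : (Γ → H) ⋊[bernoulliShift H] Γ).left).Finite := x.2
    set T : Finset Γ := (hsupp.toFinset.image (fun γ => γ₀⁻¹ * γ)).erase 1 with hT
    have hsep : ∀ t : T, ∃ N : Subgroup Γ, N.Normal ∧ N.FiniteIndex ∧ (t : Γ) ∉ N :=
      fun t => hΓ t (Finset.ne_of_mem_erase t.2)
    choose N hNnorm hNfi hNt using hsep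
    haveI : (⨅ t : T, N t).Normal := Subgroup.normal_iInf' hNnorm
    haveI : (⨅ t : T, N t).FiniteIndex := Subgroup.finiteIndex_iInf hNfi
    set φ := pushHom (⨅ t : T, N t) K with hφ
    refine ⟨φ.ker, inferInstance, inferInstance, ?_⟩
    rw [MonoidHom.mem_ker]
    intro hker
    have hleft : wreathPushFun (⨅ t : T, N t) K (x : (Γ → H) ⋊[bernoulliShift H] Γ).left
        ((γ₀ : Γ ⧸ ⨅ t : T, N t)) = 1 := by
      have h1 := congrArg SemidirectProduct.left hker
      have h2 := congrFun h1 ((γ₀ : Γ ⧸ ⨅ t : T, N t))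
      exact h2
    have hsingle : {γ : Γ | (γ : Γ ⧸ ⨅ t : T, N t) = (γ₀ : Γ ⧸ ⨅ t : T, N t)} ∩
        mulSupport (x : (Γ → H) ⋊[bernoulliShift H] Γ).left ⊆ {γ₀} := by
      rintro γ ⟨h1, h2⟩
      by_contra hne
      have hne' : γ ≠ γ₀ := by simpa using hne
      have ht : γ₀⁻¹ * γ ∈ T := by
        refine Finset.mem_erase.mpr ⟨?_, ?_⟩
        · intro h1'
          exact hne' (inv_mul_eq_one.mp h1').symm
        · exact Finset.mem_image.mpr ⟨γ, hsupp.mem_toFinset.mpr h2, rfl⟩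
      have hmem : γ₀⁻¹ * γ ∈ ⨅ t : T, N t := QuotientGroup.eq.mp h1.symm
      exact hNt ⟨_, ht⟩ (Subgroup.mem_iInf.mp hmem ⟨_, ht⟩)
    have hval := pushFun_single (⨅ t : T, N t) K
      (x : (Γ → H) ⋊[bernoulliShift H] Γ).left γ₀ hsingle
    rw [hleft] at hval
    exact hKmem ((QuotientGroup.eq_one_iff _).mp hval.symm)
  · -- easy case: use residual finiteness of Γ
    obtain ⟨Nq, hNnorm, hNfi, hgN⟩ := hΓ _ hg
    haveI := hNnorm
    haveI := hNfi
    set φ := (QuotientGroup.mk' Nq).comp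
      (SemidirectProduct.rightHom.comp (wreathProduct H Γ).subtype) with hφ
    refine ⟨φ.ker, inferInstance, inferInstance, ?_⟩
    rw [MonoidHom.mem_ker]
    intro hker
    apply hgN
    have : φ x = (((x : (Γ → H) ⋊[bernoulliShift H] Γ).right : Γ) : Γ ⧸ Nq) := rfl
    rw [this] at hker
    rwa [QuotientGroup.eq_one_iff] at hker
end
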